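/- Let Q, P ∈ ℤ[T] be polynomials with Q nonconstant, such that the resultant Res(P,Q) is nonzero and the discriminant of Q is nonzero, and let S₀ be a finite set of prime numbers. Then there exist a prime number p₀ ∉ S₀ and a positive integer n such that p₀² divides Q(n) and P(n)·Q(n)/p₀² ≡ 1 (mod p₀). In particular p₀² exactly divides Q(n) and p₀ does not divide P(n). -/

import Mathlib

open Polynomial

/-- The Sylvester matrix of the coefficient sequences `a` (of formal degree `m`) and `b`
(of formal degree `n`): the first `n` rows are the shifts of the coefficients of `a`, the
last `m` rows are the shifts of the coefficients of `b`. Its determinant is the resultant. -/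
def sylvester (m n : ℕ) (a b : ℕ → ℤ) : Matrix (Fin (n + m)) (Fin (n + m)) ℤ :=
  fun i j =>
    if (i : ℕ) < n then
      (if (i : ℕ) ≤ (j : ℕ) ∧ (j : ℕ) ≤ (i : ℕ) + m then a (m + (i : ℕ) - (j : ℕ)) else 0)
    else
      (if (i : ℕ) - n ≤ (j : ℕ) ∧ (j : ℕ) ≤ (i : ℕ) then b ((i : ℕ) - (j : ℕ)) else 0)

/-- The resultant `Res(P, Q)` of two integer polynomials, as the determinant of their
Sylvester matrix. -/
def resZ (P Q : Polynomial ℤ) : ℤ :=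
  (sylvester P.natDegree Q.natDegree P.coeff Q.coeff).det


lemma det_updateColumn_sum_aux {N : ℕ} (M : Matrix (Fin N) (Fin N) ℤ) (l : Fin N)
    (s : Finset (Fin N)) (f : Fin N → Fin N → ℤ) :
    (M.updateCol l (fun i => ∑ j ∈ s, f j i)).det
      = ∑ j ∈ s, (M.updateCol l (f j)).det := by
  induction s using Finset.induction with
  | empty =>
      simp only [Finset.sum_empty]
      exact Matrix.det_eq_zero_of_column_eq_zero l (fun i => by simp)
  | insert _ _ h ih =>
      rename_i a s
      rw [Finset.sum_insert h]
      simp only [Finset.sum_insert h]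
      rw [show (fun i => f a i + ∑ j ∈ s, f j i) = (f a + fun i => ∑ j ∈ s, f j i) from rfl,
        Matrix.det_updateCol_add, ih]

lemma sylvester_eval_comb (m n : ℕ) (a b : ℕ → ℤ) (hn : 0 < n + m) (x : ℤ) :
    ∃ A B : ℤ, (sylvester m n a b).det
      = A * (∑ k ∈ Finset.range (m+1), a k * x ^ k)
      + B * (∑ k ∈ Finset.range (n+1), b k * x ^ k) := by
  set N := n + m with hN
  set M := sylvester m n a b with hM
  set last : Fin N := ⟨N - 1, by omega⟩ with hlast
  set Pv : ℤ := ∑ k ∈ Finset.range (m+1), a k * x ^ k with hPv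
  set Qv : ℤ := ∑ k ∈ Finset.range (n+1), b k * x ^ k with hQv
  have stepA : (M.updateCol last (fun i => ∑ j : Fin N, x ^ (N - 1 - (j:ℕ)) * M i j)).det
      = M.det := by
    rw [det_updateColumn_sum_aux M last Finset.univ (fun j i => x ^ (N - 1 - (j:ℕ)) * M i j)]
    rw [Finset.sum_eq_single_of_mem last (Finset.mem_univ _)]
    · have h0 : (fun i => x ^ (N - 1 - ((last : Fin N):ℕ)) * M i last) = fun i => M i last := by
        funext i; simp [hlast]
      rw [h0, Matrix.updateCol_eq_self]
    · intro j _ hj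
      have h1 : (fun i => x ^ (N - 1 - (j:ℕ)) * M i j)
          = (x ^ (N - 1 - (j:ℕ))) • (fun i => M i j) := rfl
      rw [h1, Matrix.det_updateCol_smul, Matrix.det_updateCol_eq_zero hj, mul_zero]
  have stepB : ∀ i : Fin N, (∑ j : Fin N, x ^ (N - 1 - (j:ℕ)) * M i j)
      = if (i:ℕ) < n then x ^ (n - 1 - (i:ℕ)) * Pv else x ^ (N - 1 - (i:ℕ)) * Qv := by
    intro i
    by_cases hi : (i:ℕ) < n
    · simp only [hi, if_true]
      have hterm : ∀ j : Fin N, x ^ (N - 1 - (j:ℕ)) * M i j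
          = if (i:ℕ) ≤ (j:ℕ) ∧ (j:ℕ) ≤ (i:ℕ) + m then
              x ^ (N - 1 - (j:ℕ)) * a (m + (i:ℕ) - (j:ℕ)) else 0 := by
        intro j
        simp only [hM, _root_.sylvester, hi, if_true]
        split <;> simp
      rw [Finset.sum_congr rfl (fun j _ => hterm j)]
      rw [Fin.sum_univ_eq_sum_range
        (fun jn => if (i:ℕ) ≤ jn ∧ jn ≤ (i:ℕ) + m then x ^ (N - 1 - jn) * a (m + (i:ℕ) - jn) else 0)]
      rw [← Finset.sum_filter]
      have hfil : (Finset.range N).filter (fun jn => (i:ℕ) ≤ jn ∧ jn ≤ (i:ℕ) + m)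
          = Finset.Icc (i:ℕ) ((i:ℕ) + m) := by
        ext jn; simp only [Finset.mem_filter, Finset.mem_range, Finset.mem_Icc]
        constructor
        · rintro ⟨_, h2⟩; exact h2
        · rintro ⟨h1, h2⟩; exact ⟨by omega, h1, h2⟩
      rw [hfil]
      have hR : x ^ (n - 1 - (i:ℕ)) * Pv
          = ∑ k ∈ Finset.range (m+1), a k * x ^ (k + (n - 1 - (i:ℕ))) := by
        rw [hPv, Finset.mul_sum]
        exact Finset.sum_congr rfl (fun k _ => by rw [pow_add]; ring)
      rw [hR]
      refine Finset.sum_nbij' (fun jn => m + (i:ℕ) - jn) (fun k => m + (i:ℕ) - k)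
        ?_ ?_ ?_ ?_ ?_
      · intro jn hjn; simp only [Finset.mem_Icc] at hjn; simp only [Finset.mem_range]; omega
      · intro k hk; simp only [Finset.mem_range] at hk; simp only [Finset.mem_Icc]; omega
      · intro jn hjn; simp only [Finset.mem_Icc] at hjn; omega
      · intro k hk; simp only [Finset.mem_range] at hk; omega
      · intro jn hjn
        simp only [Finset.mem_Icc] at hjn
        rw [mul_comm]
        congr 1
        congr 1
        omega
    · simp only [hi, if_false]
      have hterm : ∀ j : Fin N, x ^ (N - 1 - (j:ℕ)) * M i j
          = if (i:ℕ) - n ≤ (j:ℕ) ∧ (j:ℕ) ≤ (i:ℕ) then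
              x ^ (N - 1 - (j:ℕ)) * b ((i:ℕ) - (j:ℕ)) else 0 := by
        intro j
        simp only [hM, _root_.sylvester, hi, if_false]
        split <;> simp
      rw [Finset.sum_congr rfl (fun j _ => hterm j)]
      rw [Fin.sum_univ_eq_sum_range
        (fun jn => if (i:ℕ) - n ≤ jn ∧ jn ≤ (i:ℕ) then x ^ (N - 1 - jn) * b ((i:ℕ) - jn) else 0)]
      rw [← Finset.sum_filter]
      have hiN : (i:ℕ) < N := i.isLt
      have hfil : (Finset.range N).filter (fun jn => (i:ℕ) - n ≤ jn ∧ jn ≤ (i:ℕ))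
          = Finset.Icc ((i:ℕ) - n) (i:ℕ) := by
        ext jn; simp only [Finset.mem_filter, Finset.mem_range, Finset.mem_Icc]
        constructor
        · rintro ⟨_, h2⟩; exact h2
        · rintro ⟨h1, h2⟩; exact ⟨by omega, h1, h2⟩
      rw [hfil]
      have hR : x ^ (N - 1 - (i:ℕ)) * Qv
          = ∑ k ∈ Finset.range (n+1), b k * x ^ (k + (N - 1 - (i:ℕ))) := by
        rw [hQv, Finset.mul_sum]
        exact Finset.sum_congr rfl (fun k _ => by rw [pow_add]; ring)
      rw [hR]
      refine Finset.sum_nbij' (fun jn => (i:ℕ) - jn) (fun k => (i:ℕ) - k)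
        ?_ ?_ ?_ ?_ ?_
      · intro jn hjn; simp only [Finset.mem_Icc] at hjn; simp only [Finset.mem_range]; omega
      · intro k hk; simp only [Finset.mem_range] at hk; simp only [Finset.mem_Icc]; omega
      · intro jn hjn; simp only [Finset.mem_Icc] at hjn; omega
      · intro k hk; simp only [Finset.mem_range] at hk; omega
      · intro jn hjn
        simp only [Finset.mem_Icc] at hjn
        rw [mul_comm]
        congr 1
        congr 1
        omega
  -- Step C
  have hcol : (fun i : Fin N => ∑ j : Fin N, x ^ (N - 1 - (j:ℕ)) * M i j)
      = Pv • (fun i : Fin N => if (i:ℕ) < n then x ^ (n - 1 - (i:ℕ)) else 0)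
        + Qv • (fun i : Fin N => if (i:ℕ) < n then 0 else x ^ (N - 1 - (i:ℕ))) := by
    funext i
    rw [stepB i]
    by_cases hi : (i:ℕ) < n <;>
      simp [hi, Pi.add_apply, Pi.smul_apply, smul_eq_mul, mul_comm]
  refine ⟨(M.updateCol last (fun i : Fin N => if (i:ℕ) < n then x ^ (n - 1 - (i:ℕ)) else 0)).det,
    (M.updateCol last (fun i : Fin N => if (i:ℕ) < n then 0 else x ^ (N - 1 - (i:ℕ)))).det, ?_⟩
  calc M.det = (M.updateCol last (fun i => ∑ j : Fin N, x ^ (N - 1 - (j:ℕ)) * M i j)).det :=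
        stepA.symm
    _ = _ := by
        rw [hcol, Matrix.det_updateCol_add, Matrix.det_updateCol_smul,
          Matrix.det_updateCol_smul]
        ring

lemma resZ_comb (P Q : Polynomial ℤ) (h : 0 < Q.natDegree + P.natDegree) (x : ℤ) :
    ∃ A B : ℤ, resZ P Q = A * P.eval x + B * Q.eval x := by
  obtain ⟨A, B, hAB⟩ := sylvester_eval_comb P.natDegree Q.natDegree P.coeff Q.coeff h x
  refine ⟨A, B, ?_⟩
  rw [resZ, hAB, ← eval_eq_sum_range, ← eval_eq_sum_range]

lemma prime_dvd_resZ {p : ℕ} (_ : p.Prime) (P Q : Polynomial ℤ)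
    (h : 0 < Q.natDegree + P.natDegree) {x : ℤ}
    (h1 : (p:ℤ) ∣ P.eval x) (h2 : (p:ℤ) ∣ Q.eval x) : (p:ℤ) ∣ resZ P Q := by
  obtain ⟨A, B, hAB⟩ := resZ_comb P Q h x
  rw [hAB]; exact dvd_add (h1.mul_left A) (h2.mul_left B)

lemma exists_prime_value (Q : Polynomial ℤ) (hQ : Q.natDegree ≠ 0) (B : Finset ℕ) :
    ∃ (p : ℕ) (y : ℤ), p.Prime ∧ p ∉ B ∧ (p:ℤ) ∣ Q.eval y := by
  classical
  set π : ℕ := ∏ q ∈ B.filter Nat.Prime, q with hπ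
  have hπpos : 0 < π :=
    Finset.prod_pos (fun q hq => (Finset.mem_filter.mp hq).2.pos)
  have hkey : ∀ p : ℕ, p.Prime → ¬ p ∣ π → p ∉ B := by
    intro p pp hdvd hmem
    exact hdvd (Finset.dvd_prod_of_mem _ (Finset.mem_filter.mpr ⟨hmem, pp⟩))
  by_cases hc : Q.eval 0 = 0
  · obtain ⟨p, pp, hpd⟩ := Nat.exists_prime_and_dvd (n := π + 1) (by omega)
    have hpπ : ¬ p ∣ π := fun h =>
      Nat.Prime.not_dvd_one pp (by simpa using Nat.dvd_sub hpd h)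
    have hdvd : ((p:ℤ)) ∣ Q.eval (p:ℤ) := by
      have := Polynomial.sub_dvd_eval_sub (p:ℤ) 0 Q
      simpa [hc] using this
    exact ⟨p, (p:ℤ), pp, hkey p pp hpπ, hdvd⟩
  · have hm : Q.eval 0 * (π:ℤ) ≠ 0 :=
      mul_ne_zero hc (by exact_mod_cast hπpos.ne')
    obtain ⟨x, hx⟩ : ∃ x : ℤ, 2 * |Q.eval 0| < |Q.eval (Q.eval 0 * (π:ℤ) * x)| := by
      by_contra hall
      push_neg at hall
      have hfin : Set.Finite (Set.univ : Set ℤ) := by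
        have hsub : (Set.univ : Set ℤ) ⊆
            ⋃ v ∈ (Finset.Icc (-(2*|Q.eval 0|)) (2*|Q.eval 0|) : Finset ℤ),
              {t : ℤ | ((Q.comp (C (Q.eval 0 * (π:ℤ)) * X)) - C v).IsRoot t} := by
          intro t _
          have hv : Q.eval (Q.eval 0 * (π:ℤ) * t)
              ∈ (Finset.Icc (-(2*|Q.eval 0|)) (2*|Q.eval 0|) : Finset ℤ) := by
            simp only [Finset.mem_Icc]
            constructor
            · linarith [neg_abs_le (Q.eval (Q.eval 0 * (π:ℤ) * t)), hall t]
            · linarith [le_abs_self (Q.eval (Q.eval 0 * (π:ℤ) * t)), hall t]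
          apply Set.mem_biUnion hv
          simp [Polynomial.IsRoot, Polynomial.eval_comp]
        refine Set.Finite.subset (Set.Finite.biUnion (Finset.Icc _ _).finite_toSet ?_) hsub
        intro v _
        apply Polynomial.finite_setOf_isRoot
        intro h0
        have hdeg : (Q.comp (C (Q.eval 0 * (π:ℤ)) * X)).natDegree = Q.natDegree := by
          rw [Polynomial.natDegree_comp, Polynomial.natDegree_C_mul_X _ hm, mul_one]
        rw [sub_eq_zero] at h0
        rw [h0, Polynomial.natDegree_C] at hdeg
        exact hQ hdeg.symm
      exact Set.infinite_univ hfin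
    obtain ⟨K, hK⟩ : (Q.eval 0 * (π:ℤ) * x) ∣ Q.eval (Q.eval 0 * (π:ℤ) * x) - Q.eval 0 := by
      simpa using Polynomial.sub_dvd_eval_sub (Q.eval 0 * (π:ℤ) * x) 0 Q
    have hcN : Q.eval 0 * (1 + (π:ℤ) * x * K) = Q.eval (Q.eval 0 * (π:ℤ) * x) := by
      linear_combination -hK
    have hNabs : (1 + (π:ℤ)*x*K).natAbs ≠ 1 := by
      intro h1
      have habs : |1 + (π:ℤ)*x*K| = 1 := by
        rw [Int.abs_eq_natAbs, h1]; rfl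
      have heq : |Q.eval (Q.eval 0 * (π:ℤ) * x)| = |Q.eval 0| := by
        rw [← hcN, abs_mul, habs, mul_one]
      have h0 : 0 < |Q.eval 0| := abs_pos.mpr hc
      rw [heq] at hx
      linarith
    obtain ⟨p, pp, hpd⟩ := Nat.exists_prime_and_dvd hNabs
    have hpdZ : (p:ℤ) ∣ 1 + (π:ℤ)*x*K := by rwa [Int.natCast_dvd]
    have hpπ : ¬ p ∣ π := by
      intro h
      have h2 : (p:ℤ) ∣ (π:ℤ) := Int.natCast_dvd_natCast.mpr h
      have h3 : (p:ℤ) ∣ (1:ℤ) := by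
        have h4 := dvd_sub hpdZ (h2.mul_right (x*K))
        have h5 : (1 + (π:ℤ)*x*K) - (π:ℤ)*(x*K) = 1 := by ring
        rwa [h5] at h4
      exact Nat.Prime.not_dvd_one pp (by exact_mod_cast h3)
    refine ⟨p, Q.eval 0 * (π:ℤ) * x, pp, hkey p pp hpπ, ?_⟩
    rw [← hcN]
    exact hpdZ.mul_left _

/-- (Manduchi's lemma.) If `Q` is nonconstant, `Res(P,Q) ≠ 0` and
`disc(Q) ≠ 0` (the latter being equivalent to `Res(Q, Q') ≠ 0` for nonconstant `Q`), then
outside any prescribed finite set of primes there are a prime `p₀` and a positive integer `n`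
with `p₀² ∣ Q(n)` and `P(n)·Q(n)/p₀² ≡ 1 (mod p₀)`; in particular `p₀² ∥ Q(n)` and
`p₀ ∤ P(n)`. -/
theorem statement_7 (Q P : Polynomial ℤ) (hQ : Q.natDegree ≠ 0)
    (hres : resZ P Q ≠ 0)
    (hdisc : resZ Q (derivative Q) ≠ 0)
    (S₀ : Finset ℕ) :
    ∃ p₀ : ℕ, p₀.Prime ∧ p₀ ∉ S₀ ∧ ∃ n : ℕ, 0 < n ∧
      (p₀ : ℤ) ^ 2 ∣ Q.eval (n : ℤ) ∧
      (P.eval (n : ℤ) * Q.eval (n : ℤ)) / (p₀ : ℤ) ^ 2 ≡ 1 [ZMOD (p₀ : ℤ)] ∧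
      ¬ ((p₀ : ℤ) ^ 3 ∣ Q.eval (n : ℤ)) ∧ ¬ ((p₀ : ℤ) ∣ P.eval (n : ℤ)) := by
  classical
  have hQpos : 0 < Q.natDegree := Nat.pos_of_ne_zero hQ
  set BAD : Finset ℕ :=
    S₀ ∪ (resZ P Q).natAbs.primeFactors ∪ (resZ Q (derivative Q)).natAbs.primeFactors with hBAD
  obtain ⟨p, y, pp, hpB, hpQy⟩ := exists_prime_value Q hQ BAD
  have hppz : Prime ((p:ℤ)) := Nat.prime_iff_prime_int.mp pp
  have hpz0 : ((p:ℤ)) ≠ 0 := by exact_mod_cast pp.pos.ne'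
  have hres1 : ¬ ((p:ℤ) ∣ resZ P Q) := by
    intro h
    apply hpB
    have hmem : p ∈ (resZ P Q).natAbs.primeFactors :=
      Nat.mem_primeFactors.mpr ⟨pp, Int.natCast_dvd.mp h, Int.natAbs_ne_zero.mpr hres⟩
    rw [hBAD]
    exact Finset.mem_union_left _ (Finset.mem_union_right _ hmem)
  have hres2 : ¬ ((p:ℤ) ∣ resZ Q (derivative Q)) := by
    intro h
    apply hpB
    have hmem : p ∈ (resZ Q (derivative Q)).natAbs.primeFactors :=
      Nat.mem_primeFactors.mpr ⟨pp, Int.natCast_dvd.mp h, Int.natAbs_ne_zero.mpr hdisc⟩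
    rw [hBAD]
    exact Finset.mem_union_right _ hmem
  have hsz1 : 0 < Q.natDegree + P.natDegree := by omega
  have hsz2 : 0 < (derivative Q).natDegree + Q.natDegree := by omega
  have hPy : ¬ ((p:ℤ) ∣ P.eval y) := fun h => hres1 (prime_dvd_resZ pp P Q hsz1 h hpQy)
  have hQ'y : ¬ ((p:ℤ) ∣ (derivative Q).eval y) :=
    fun h => hres2 (prime_dvd_resZ pp Q (derivative Q) hsz2 hpQy h)
  have hcop : ∀ z : ℤ, ¬ ((p:ℤ) ∣ z) → ∃ u v : ℤ, u * (p:ℤ) + v * z = 1 := by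
    intro z hz
    obtain ⟨u, v, huv⟩ := (hppz.coprime_iff_not_dvd).mpr hz
    exact ⟨u, v, huv⟩
  have hmod : ∀ (R : Polynomial ℤ) (a b : ℤ), (p:ℤ) ∣ a - b → (p:ℤ) ∣ R.eval a - R.eval b :=
    fun R a b h => dvd_trans h (Polynomial.sub_dvd_eval_sub a b R)
  -- Stage 1 : find n₁ ≡ y mod p with p² ∣ Q(n₁)
  obtain ⟨c, hc⟩ := hpQy
  obtain ⟨u, v, huv⟩ := hcop _ hQ'y
  obtain ⟨k, hk⟩ := Q.binomExpansion y ((p:ℤ) * (-(c*v)))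
  have hQn₁ : Q.eval (y + (p:ℤ) * (-(c*v))) = (p:ℤ)^2 * (c*u + k*(c*v)^2) := by
    rw [hk, hc]
    linear_combination (-((p:ℤ) * c)) * huv
  obtain ⟨n₁, hd₁, d, hQn₁'⟩ : ∃ n₁ : ℤ, (p:ℤ) ∣ n₁ - y ∧ ∃ d : ℤ, Q.eval n₁ = (p:ℤ)^2 * d :=
    ⟨y + (p:ℤ) * (-(c*v)), ⟨-(c*v), by ring⟩, _, hQn₁⟩
  have hQ'n₁ : ¬ ((p:ℤ) ∣ (derivative Q).eval n₁) := by
    intro h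
    apply hQ'y
    have h2 := hmod (derivative Q) n₁ y hd₁
    have := dvd_sub h h2
    simpa using this
  -- Stage 2 : adjust modulo p³
  obtain ⟨u₃, v₃, h₃⟩ := hcop _ hQ'n₁
  obtain ⟨u₂, v₂, h₂⟩ := hcop _ hPy
  obtain ⟨k₂, hk₂⟩ := Q.binomExpansion n₁ ((p:ℤ)^2 * (v₃*(v₂ - d)))
  have hQn₂ : Q.eval (n₁ + (p:ℤ)^2 * (v₃*(v₂-d)))
      = (p:ℤ)^2 * (d + (derivative Q).eval n₁ * (v₃*(v₂-d)) + k₂*(p:ℤ)^2*(v₃*(v₂-d))^2) := by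
    rw [hk₂, hQn₁']; ring
  have he : (p:ℤ) ∣ (d + (derivative Q).eval n₁ * (v₃*(v₂-d)) + k₂*(p:ℤ)^2*(v₃*(v₂-d))^2) - v₂ := by
    refine ⟨(d - v₂)*u₃ + (p:ℤ)*k₂*(v₃*(v₂-d))^2, ?_⟩
    linear_combination (v₂ - d) * h₃
  obtain ⟨n₂, hd₂, e, hQn₂', he'⟩ : ∃ n₂ : ℤ, (p:ℤ) ∣ n₂ - y ∧ ∃ e : ℤ,
      Q.eval n₂ = (p:ℤ)^2 * e ∧ (p:ℤ) ∣ e - v₂ := by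
    refine ⟨n₁ + (p:ℤ)^2*(v₃*(v₂-d)), ?_, _, hQn₂, he⟩
    obtain ⟨w₁, hw₁⟩ := hd₁
    exact ⟨w₁ + (p:ℤ)*(v₃*(v₂-d)), by linear_combination hw₁⟩
  -- Final positive shift
  set T : ℤ := (p:ℤ)^3 * ((n₂.natAbs : ℤ) + 1) with hT
  have hp2 : (2:ℤ) ≤ (p:ℤ) := by exact_mod_cast pp.two_le
  have hcube : (1:ℤ) ≤ (p:ℤ)^3 := by nlinarith
  have hn₃pos : 0 < n₂ + T := by
    have h1 : ((n₂.natAbs:ℤ)) = |n₂| := (Int.abs_eq_natAbs n₂).symm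
    nlinarith [neg_abs_le n₂, abs_nonneg n₂]
  obtain ⟨z, hz⟩ : (p:ℤ)^3 ∣ Q.eval (n₂ + T) - Q.eval n₂ :=
    dvd_trans ⟨(n₂.natAbs:ℤ)+1, by rw [hT]; ring⟩ (Polynomial.sub_dvd_eval_sub _ _ Q)
  have hQfin : Q.eval (n₂ + T) = (p:ℤ)^2 * (e + (p:ℤ)*z) := by
    have hq : Q.eval (n₂+T) = Q.eval n₂ + (p:ℤ)^3*z := by linarith [hz]
    rw [hq, hQn₂']; ring
  have hdfin : (p:ℤ) ∣ (n₂ + T) - y := by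
    obtain ⟨w₂, hw₂⟩ := hd₂
    exact ⟨w₂ + (p:ℤ)^2*((n₂.natAbs:ℤ)+1), by rw [hT]; linear_combination hw₂⟩
  have hefin : (p:ℤ) ∣ (e + (p:ℤ)*z) - v₂ := by
    obtain ⟨w₃, hw₃⟩ := he'
    exact ⟨w₃ + z, by linear_combination hw₃⟩
  have hPfin : (p:ℤ) ∣ P.eval (n₂+T) - P.eval y := hmod P _ y hdfin
  have hne : ¬ ((p:ℤ) ∣ (e + (p:ℤ)*z)) := by
    intro h
    have hv₂ : (p:ℤ) ∣ v₂ := by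
      have := dvd_sub h hefin
      simpa using this
    have h1 : (p:ℤ) ∣ 1 := by
      have h4 : (p:ℤ) ∣ v₂ * P.eval y := hv₂.mul_right _
      have h5 : (p:ℤ) ∣ u₂*(p:ℤ) := dvd_mul_left _ _
      have := dvd_add h5 h4
      rwa [h₂] at this
    exact hppz.not_dvd_one h1
  have hnP : ¬ ((p:ℤ) ∣ P.eval (n₂+T)) := by
    intro h
    apply hPy
    have := dvd_sub h hPfin
    simpa using this
  have hS₀ : p ∉ S₀ := by
    intro h
    exact hpB (by rw [hBAD]; exact Finset.mem_union_left _ (Finset.mem_union_left _ h))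
  refine ⟨p, pp, hS₀, (n₂+T).toNat, ?_, ?_, ?_, ?_, ?_⟩
  · omega
  all_goals rw [Int.toNat_of_nonneg hn₃pos.le]
  · exact ⟨e + (p:ℤ)*z, hQfin⟩
  · have hdiv : P.eval (n₂+T) * Q.eval (n₂+T) / (p:ℤ)^2 = P.eval (n₂+T) * (e + (p:ℤ)*z) := by
      rw [hQfin, show P.eval (n₂+T) * ((p:ℤ)^2*(e+(p:ℤ)*z))
        = (p:ℤ)^2 * (P.eval (n₂+T)*(e+(p:ℤ)*z)) from by ring,
        Int.mul_ediv_cancel_left _ (pow_ne_zero 2 hpz0)]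
    rw [hdiv]
    obtain ⟨α, hα⟩ := hPfin
    obtain ⟨β, hβ⟩ := hefin
    refine Int.modEq_iff_dvd.mpr ⟨u₂ - α*v₂ - β*P.eval y - (p:ℤ)*α*β, ?_⟩
    linear_combination (-(e + (p:ℤ)*z)) * hα + (-(P.eval y + (p:ℤ)*α)) * hβ - h₂
  · rintro ⟨g, hg⟩
    apply hne
    refine ⟨g, ?_⟩
    have : (p:ℤ)^2 * (e + (p:ℤ)*z) = (p:ℤ)^2 * ((p:ℤ)*g) := by
      rw [← hQfin, hg]; ring
    exact mul_left_cancel₀ (pow_ne_zero 2 hpz0) this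
  · exact hnP
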